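/- For every z ∈ ℂ and every τ in the upper half-plane, θ[1;3/5]²·θ[1;1/5](z,τ)·θ[1;9/5](z,τ) − θ[1;1/5]²·θ[1;3/5](z,τ)·θ[1;7/5](z,τ) + θ[1;1/5]·θ[1;3/5]·θ[1;1](z,τ)² = 0. -/

import Mathlib

open Complex Real

noncomputable def thetaChar (ε ε' : ℝ) (ζ τ : ℂ) : ℂ :=
  ∑' n : ℤ, Complex.exp (2 * (Real.pi : ℂ) * I *
    ((1 / 2) * ((n : ℂ) + (ε : ℂ) / 2) ^ 2 * τ + ((n : ℂ) + (ε : ℂ) / 2) * (ζ + (ε' : ℂ) / 2)))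

namespace S3

/-- conversion to Mathlib's jacobiTheta₂ -/
lemma theta_as_J (ε' : ℝ) (z τ : ℂ) :
    thetaChar 1 ε' z τ
      = cexp (π * I * (τ/4 + z + (ε' : ℂ)/2)) * jacobiTheta₂ (z + (ε' : ℂ)/2 + τ/2) τ := by
  rw [thetaChar, jacobiTheta₂, ← tsum_mul_left]
  refine tsum_congr fun n => ?_
  rw [jacobiTheta₂_term, ← Complex.exp_add]
  congr 1
  push_cast
  ring

lemma J_swap (τ c : ℂ) :
    jacobiTheta₂ (τ/2 - c) τ = cexp (2 * π * I * c) * jacobiTheta₂ (τ/2 + c) τ := by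
  have h1 : jacobiTheta₂ (c - τ/2 + τ) τ = cexp (-π * I * (τ + 2 * (c - τ/2))) * jacobiTheta₂ (c - τ/2) τ :=
    jacobiTheta₂_add_left' _ _
  have h2 : jacobiTheta₂ (τ/2 - c) τ = jacobiTheta₂ (c - τ/2) τ := by
    rw [show τ/2 - c = -(c - τ/2) by ring, jacobiTheta₂_neg_left]
  rw [show c - τ/2 + τ = τ/2 + c by ring] at h1
  rw [h2, h1, ← mul_assoc, ← Complex.exp_add,
    show 2 * (π:ℂ) * I * c + -π * I * (τ + 2 * (c - τ/2)) = -π * I * τ + π * I * τ by ring,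
    show -(π:ℂ) * I * τ + π * I * τ = 0 by ring, Complex.exp_zero, one_mul]

lemma J_half_zero (τ : ℂ) : jacobiTheta₂ (τ/2 + 2⁻¹) τ = 0 := by
  have h1 := J_swap τ 2⁻¹
  have h2 : jacobiTheta₂ (τ/2 - 2⁻¹) τ = jacobiTheta₂ (τ/2 + 2⁻¹) τ := by
    rw [show τ/2 + 2⁻¹ = τ/2 - 2⁻¹ + 1 by ring, jacobiTheta₂_add_left]
  have h3 : cexp (2 * π * I * 2⁻¹) = -1 := by
    rw [show (2 : ℂ) * π * I * 2⁻¹ = π * I by ring, Complex.exp_pi_mul_I]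
  rw [h2, h3, neg_one_mul] at h1
  linear_combination h1 / 2
variable (τ : ℂ)

noncomputable def u : ℂ := cexp (π * I / 10)
noncomputable def Ac : ℂ := jacobiTheta₂ (τ/2 + 3/10) τ
noncomputable def Bc : ℂ := jacobiTheta₂ (τ/2 + 1/10) τ

/-- The reduced function `G`. -/
noncomputable def G (w : ℂ) : ℂ :=
  u^4 * Ac τ^2 * (jacobiTheta₂ (w + 1/10) τ * jacobiTheta₂ (w - 1/10) τ)
  - Bc τ^2 * (jacobiTheta₂ (w + 3/10) τ * jacobiTheta₂ (w - 3/10) τ)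
  + u^2 * (Ac τ * Bc τ) * (jacobiTheta₂ (w + 1/2) τ * jacobiTheta₂ (w - 1/2) τ)

lemma u_pow (n : ℕ) : u ^ n = cexp (π * I * n / 10) := by
  rw [u, ← Complex.exp_nat_mul]; ring_nf

lemma u_ten : u ^ 10 = -1 := by
  rw [u_pow, show (π:ℂ) * I * (10:ℕ) / 10 = π * I by ring, Complex.exp_pi_mul_I]

lemma J_swap' (c : ℂ) (n : ℕ) (hc : 2 * π * I * c = π * I * n / 10) :
    jacobiTheta₂ (τ/2 - c) τ = u ^ n * jacobiTheta₂ (τ/2 + c) τ := by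
  rw [J_swap, u_pow, hc]

lemma eval₁ : G τ (τ/2 + 1/5) = 0 := by
  have h2 : jacobiTheta₂ (τ/2 + 1/5 + 3/10) τ = 0 := by
    rw [show τ/2 + 1/5 + 3/10 = τ/2 + 2⁻¹ by ring]; exact J_half_zero τ
  have h1a : jacobiTheta₂ (τ/2 + 1/5 + 1/10) τ = Ac τ := by
    rw [show τ/2 + 1/5 + 1/10 = τ/2 + 3/10 by ring]; rfl
  have h1b : jacobiTheta₂ (τ/2 + 1/5 - 1/10) τ = Bc τ := by
    rw [show τ/2 + 1/5 - 1/10 = τ/2 + 1/10 by ring]; rfl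
  have h3 : jacobiTheta₂ (τ/2 + 1/5 + 1/2) τ = u^6 * Ac τ := by
    rw [show τ/2 + 1/5 + 1/2 = (τ/2 - 3/10) + 1 by ring, jacobiTheta₂_add_left]
    exact J_swap' τ (3/10) 6 (by ring)
  have h3b : jacobiTheta₂ (τ/2 + 1/5 - 1/2) τ = u^6 * Ac τ := by
    rw [show τ/2 + 1/5 - 1/2 = τ/2 - 3/10 by ring]
    exact J_swap' τ (3/10) 6 (by ring)
  rw [G, h2, h1a, h1b, h3, h3b]
  linear_combination (u^4 * Ac τ^3 * Bc τ) * u_ten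

lemma eval₂ : G τ (τ/2 + 2/5) = 0 := by
  have h1 : jacobiTheta₂ (τ/2 + 2/5 + 1/10) τ = 0 := by
    rw [show τ/2 + 2/5 + 1/10 = τ/2 + 2⁻¹ by ring]; exact J_half_zero τ
  have h2a : jacobiTheta₂ (τ/2 + 2/5 + 3/10) τ = u^6 * Ac τ := by
    rw [show τ/2 + 2/5 + 3/10 = (τ/2 - 3/10) + 1 by ring, jacobiTheta₂_add_left]
    exact J_swap' τ (3/10) 6 (by ring)
  have h2b : jacobiTheta₂ (τ/2 + 2/5 - 3/10) τ = Bc τ := by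
    rw [show τ/2 + 2/5 - 3/10 = τ/2 + 1/10 by ring]; rfl
  have h3a : jacobiTheta₂ (τ/2 + 2/5 + 1/2) τ = u^2 * Bc τ := by
    rw [show τ/2 + 2/5 + 1/2 = (τ/2 - 1/10) + 1 by ring, jacobiTheta₂_add_left]
    exact J_swap' τ (1/10) 2 (by ring)
  have h3b : jacobiTheta₂ (τ/2 + 2/5 - 1/2) τ = u^2 * Bc τ := by
    rw [show τ/2 + 2/5 - 1/2 = τ/2 - 1/10 by ring]
    exact J_swap' τ (1/10) 2 (by ring)
  rw [G, h1, h2a, h2b, h3a, h3b]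
  ring

variable {τ : ℂ}

noncomputable def Dc (τ : ℂ) (d : ℤ) : ℂ :=
  u^4 * Ac τ^2 * cexp (π * I * d / 5) - Bc τ^2 * cexp (3 * π * I * d / 5)
  + u^2 * (Ac τ * Bc τ) * cexp (π * I * d)

noncomputable def inn (τ : ℂ) (s : ℤ) : ℂ :=
  ∑' e : ℤ, cexp (π * I * τ * ((s : ℂ) - 2 * (e : ℂ))^2 / 2) * Dc τ (s - 2 * e)

lemma summable_norm_term (hτ : 0 < τ.im) (z : ℂ) :
    Summable fun n : ℤ => ‖jacobiTheta₂_term n z τ‖ := by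
  have h := summable_pow_mul_jacobiTheta₂_term_bound |z.im| hτ 0
  simp only [pow_zero, one_mul] at h
  exact h.of_nonneg_of_le (fun n => norm_nonneg _)
    (fun n => norm_jacobiTheta₂_term_le hτ le_rfl le_rfl n)

lemma hasSum_prodJJ (hτ : 0 < τ.im) (w b : ℂ) :
    HasSum (fun p : ℤ × ℤ => jacobiTheta₂_term p.1 (w + b) τ * jacobiTheta₂_term p.2 (w - b) τ)
      (jacobiTheta₂ (w + b) τ * jacobiTheta₂ (w - b) τ) := by
  have hA := summable_norm_term hτ (w + b)
  have hB := summable_norm_term hτ (w - b)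
  have hs := summable_mul_of_summable_norm hA hB
  have ht := (tsum_mul_tsum_of_summable_norm hA hB).symm
  rw [jacobiTheta₂, jacobiTheta₂]
  exact ht ▸ hs.hasSum

/-- the skew equivalence (s,e) ↦ (s-e, e) -/
def skew : ℤ × ℤ ≃ ℤ × ℤ where
  toFun q := (q.1 - q.2, q.2)
  invFun p := (p.1 + p.2, p.2)
  left_inv q := by simp
  right_inv p := by simp

lemma decomp (hτ : 0 < τ.im) (w : ℂ) :
    HasSum (fun s : ℤ => cexp (2 * π * I * s * w + π * I * τ * (s:ℂ)^2 / 2) * inn τ s)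
      (G τ w) := by
  have h1 := (hasSum_prodJJ hτ w (1/10)).mul_left (u^4 * Ac τ^2)
  have h2 := (hasSum_prodJJ hτ w (3/10)).mul_left (Bc τ^2)
  have h3 := (hasSum_prodJJ hτ w (1/2)).mul_left (u^2 * (Ac τ * Bc τ))
  have hG := (h1.sub h2).add h3
  rw [show u^4 * Ac τ^2 * (jacobiTheta₂ (w + 1/10) τ * jacobiTheta₂ (w - 1/10) τ)
      - Bc τ^2 * (jacobiTheta₂ (w + 3/10) τ * jacobiTheta₂ (w - 3/10) τ)
      + u^2 * (Ac τ * Bc τ) * (jacobiTheta₂ (w + 1/2) τ * jacobiTheta₂ (w - 1/2) τ) = G τ w from rfl] at hG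
  set bigF : ℤ × ℤ → ℂ := fun p =>
    cexp (2 * π * I * ((p.1 : ℂ) + (p.2 : ℂ)) * w + π * I * ((p.1:ℂ)^2 + (p.2:ℂ)^2) * τ)
      * Dc τ (p.1 - p.2) with hbigF
  have hpt : ∀ p : ℤ × ℤ,
      u^4 * Ac τ^2 * (jacobiTheta₂_term p.1 (w + 1/10) τ * jacobiTheta₂_term p.2 (w - 1/10) τ)
      - Bc τ^2 * (jacobiTheta₂_term p.1 (w + 3/10) τ * jacobiTheta₂_term p.2 (w - 3/10) τ)
      + u^2 * (Ac τ * Bc τ) * (jacobiTheta₂_term p.1 (w + 1/2) τ * jacobiTheta₂_term p.2 (w - 1/2) τ)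
      = bigF p := by
    intro p
    have key : ∀ b : ℂ, jacobiTheta₂_term p.1 (w + b) τ * jacobiTheta₂_term p.2 (w - b) τ
        = cexp (2 * π * I * ((p.1 : ℂ) + (p.2 : ℂ)) * w + π * I * ((p.1:ℂ)^2 + (p.2:ℂ)^2) * τ)
          * cexp (2 * b * π * I * ((p.1 : ℂ) - (p.2 : ℂ))) := by
      intro b
      rw [jacobiTheta₂_term, jacobiTheta₂_term, ← Complex.exp_add, ← Complex.exp_add]
      congr 1
      ring
    rw [hbigF]
    simp only [key, Dc]
    have c1 : (2 : ℂ) * (1/10) * π * I * ((p.1 : ℂ) - (p.2 : ℂ)) = π * I * ((p.1 - p.2 : ℤ) : ℂ) / 5 := by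
      push_cast; ring
    have c2 : (2 : ℂ) * (3/10) * π * I * ((p.1 : ℂ) - (p.2 : ℂ)) = 3 * π * I * ((p.1 - p.2 : ℤ) : ℂ) / 5 := by
      push_cast; ring
    have c3 : (2 : ℂ) * (1/2) * π * I * ((p.1 : ℂ) - (p.2 : ℂ)) = π * I * ((p.1 - p.2 : ℤ) : ℂ) := by
      push_cast; ring
    rw [c1, c2, c3]
    ring
  rw [funext hpt] at hG
  have hσ : HasSum (bigF ∘ ⇑skew) (G τ w) := (skew.hasSum_iff).mpr hG
  refine HasSum.prod_fiberwise hσ fun s => ?_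
  -- inner fiber
  have hse : ∀ e : ℤ, (bigF ∘ ⇑skew) (s, e)
      = cexp (2 * π * I * s * w + π * I * τ * (s:ℂ)^2 / 2)
        * (cexp (π * I * τ * ((s : ℂ) - 2 * (e : ℂ))^2 / 2) * Dc τ (s - 2 * e)) := by
    intro e
    simp only [hbigF, Function.comp_apply, skew, Equiv.coe_fn_mk]
    rw [show s - e - e = s - 2 * e by ring, ← mul_assoc, ← Complex.exp_add]
    congr 2
    push_cast
    ring
  have hsum_e : Summable fun e : ℤ => (bigF ∘ ⇑skew) (s, e) := hσ.summable.prod_factor s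
  rw [funext hse] at hsum_e
  have hg : Summable fun e : ℤ =>
      cexp (π * I * τ * ((s : ℂ) - 2 * (e : ℂ))^2 / 2) * Dc τ (s - 2 * e) :=
    (summable_mul_left_iff (Complex.exp_ne_zero _)).mp hsum_e
  have := hg.hasSum.mul_left (cexp (2 * π * I * s * w + π * I * τ * (s:ℂ)^2 / 2))
  rw [← funext hse] at this
  exact this

/-- tail bound for a ℤ-indexed series with three main terms at 0, -1, -2 -/
lemma tail3 {F : ℤ → ℂ} {K r : ℝ} (hsum : Summable F) (hr0 : 0 ≤ r) (hr1 : r < 1) (hK : 0 ≤ K)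
    (hF : ∀ s : ℤ, s ≠ 0 → s ≠ -1 → s ≠ -2 → ‖F s‖ ≤ K * r ^ (s + 1).natAbs) :
    ‖(∑' s : ℤ, F s) - F 0 - F (-1) - F (-2)‖ ≤ 2 * K * r ^ 2 / (1 - r) := by
  have hgeo : Summable fun n : ℕ => K * r ^ 2 * r ^ n :=
    (summable_geometric_of_lt_one hr0 hr1).mul_left _
  have hb1 : ∀ n : ℕ, ‖F (n + 1)‖ ≤ K * r ^ 2 * r ^ n := by
    intro n
    have := hF (n + 1) (by omega) (by omega) (by omega)
    rw [show ((n : ℤ) + 1 + 1).natAbs = n + 2 by omega] at this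
    calc ‖F (n+1)‖ ≤ K * r ^ (n + 2) := this
      _ = K * r ^ 2 * r ^ n := by ring
  have hb2 : ∀ n : ℕ, ‖F (-(n : ℤ) - 3)‖ ≤ K * r ^ 2 * r ^ n := by
    intro n
    have := hF (-(n : ℤ) - 3) (by omega) (by omega) (by omega)
    rw [show (-(n : ℤ) - 3 + 1).natAbs = n + 2 by omega] at this
    calc ‖F (-(n:ℤ)-3)‖ ≤ K * r ^ (n + 2) := this
      _ = K * r ^ 2 * r ^ n := by ring
  have hs1 : Summable fun n : ℕ => F (n + 1) :=
    hsum.comp_injective (fun a b h => by omega)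
  have hs2 : Summable fun n : ℕ => F (-(n : ℤ) - 3) :=
    hsum.comp_injective (fun a b h => by omega)
  have hsnat : Summable fun n : ℕ => F n := hsum.comp_injective (fun a b h => by omega)
  have hsneg : Summable fun n : ℕ => F (-(n + 1) : ℤ) :=
    hsum.comp_injective (fun a b h => by omega)
  have hsplit : ∑' s : ℤ, F s = (∑' n : ℕ, F n) + ∑' n : ℕ, F (-(n + 1) : ℤ) :=
    tsum_of_nat_of_neg_add_one hsnat hsneg
  have hp1 : ∑' n : ℕ, F n = F 0 + ∑' n : ℕ, F (n + 1) := by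
    rw [Summable.tsum_eq_zero_add hsnat]; norm_num
  have e1 : ∑' n : ℕ, F (-(n + 1) : ℤ) = F (-1) + ∑' n : ℕ, F (-((n : ℤ) + 2)) := by
    rw [Summable.tsum_eq_zero_add hsneg]
    exact congrArg₂ HAdd.hAdd (by norm_num) (tsum_congr fun n => by congr 1 <;> omega)
  have e2 : ∑' n : ℕ, F (-((n : ℤ) + 2)) = F (-2) + ∑' n : ℕ, F (-(n : ℤ) - 3) := by
    have hs : Summable fun n : ℕ => F (-((n : ℤ) + 2)) :=
      hsum.comp_injective (fun a b h => by omega)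
    rw [Summable.tsum_eq_zero_add hs]
    exact congrArg₂ HAdd.hAdd (by norm_num) (tsum_congr fun n => by congr 1 <;> omega)
  have hp2 : ∑' n : ℕ, F (-(n + 1) : ℤ) = F (-1) + (F (-2) + ∑' n : ℕ, F (-(n : ℤ) - 3)) := by
    rw [e1, e2]
  have hnorm1 : ‖∑' n : ℕ, F (n + 1)‖ ≤ K * r ^ 2 / (1 - r) := by
    have h1 : Summable fun n : ℕ => ‖F (n + 1)‖ :=
      hgeo.of_nonneg_of_le (fun n => norm_nonneg _) hb1
    calc ‖∑' n : ℕ, F (n + 1)‖ ≤ ∑' n : ℕ, ‖F (n + 1)‖ := norm_tsum_le_tsum_norm h1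
      _ ≤ ∑' n : ℕ, K * r ^ 2 * r ^ n := Summable.tsum_le_tsum hb1 h1 hgeo
      _ = K * r ^ 2 * (1 - r)⁻¹ := by
          rw [tsum_mul_left, tsum_geometric_of_lt_one hr0 hr1]
      _ = K * r ^ 2 / (1 - r) := by rw [div_eq_mul_inv]
  have hnorm2 : ‖∑' n : ℕ, F (-(n : ℤ) - 3)‖ ≤ K * r ^ 2 / (1 - r) := by
    have h1 : Summable fun n : ℕ => ‖F (-(n : ℤ) - 3)‖ :=
      hgeo.of_nonneg_of_le (fun n => norm_nonneg _) hb2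
    calc ‖∑' n : ℕ, F (-(n:ℤ) - 3)‖ ≤ ∑' n : ℕ, ‖F (-(n:ℤ) - 3)‖ := norm_tsum_le_tsum_norm h1
      _ ≤ ∑' n : ℕ, K * r ^ 2 * r ^ n := Summable.tsum_le_tsum hb2 h1 hgeo
      _ = K * r ^ 2 * (1 - r)⁻¹ := by
          rw [tsum_mul_left, tsum_geometric_of_lt_one hr0 hr1]
      _ = K * r ^ 2 / (1 - r) := by rw [div_eq_mul_inv]
  have : (∑' s : ℤ, F s) - F 0 - F (-1) - F (-2)
      = (∑' n : ℕ, F (n + 1)) + ∑' n : ℕ, F (-(n : ℤ) - 3) := by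
    rw [hsplit, hp1, hp2]; ring
  rw [this]
  calc ‖(∑' n : ℕ, F (n + 1)) + ∑' n : ℕ, F (-(n : ℤ) - 3)‖
      ≤ ‖∑' n : ℕ, F (n + 1)‖ + ‖∑' n : ℕ, F (-(n : ℤ) - 3)‖ := norm_add_le _ _
    _ ≤ K * r ^ 2 / (1 - r) + K * r ^ 2 / (1 - r) := add_le_add hnorm1 hnorm2
    _ = 2 * K * r ^ 2 / (1 - r) := by ring

lemma inn_shift (τ : ℂ) (r t : ℤ) : inn τ (r + 2 * t) = inn τ r := by
  rw [inn, inn]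
  rw [← (Equiv.addRight t).tsum_eq
    (fun e : ℤ => cexp (π * I * τ * (((r + 2*t : ℤ) : ℂ) - 2 * (e : ℂ))^2 / 2)
      * Dc τ (r + 2*t - 2 * e))]
  refine tsum_congr fun a => ?_
  simp only [Equiv.coe_addRight]
  rw [show r + 2*t - 2*(a + t) = r - 2*a by ring]
  congr 2
  push_cast
  ring

lemma inn_parity (τ : ℂ) (s : ℤ) : inn τ s = if Even s then inn τ 0 else inn τ 1 := by
  rcases Int.even_or_odd s with ⟨t, ht⟩ | ⟨t, ht⟩
  · rw [if_pos ⟨t, ht⟩, show s = 0 + 2 * t by omega, inn_shift]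
  · rw [if_neg (by rw [ht]; exact Int.not_even_iff_odd.mpr ⟨t, rfl⟩),
      show s = 1 + 2 * t by omega, inn_shift]

lemma norm_cexp_aux (a b : ℝ) (τ : ℂ) :
    ‖cexp ((a:ℂ) * τ * I + (b:ℂ) * I)‖ = rexp (-(a * τ.im)) := by
  rw [Complex.norm_exp]
  congr 1
  simp only [Complex.add_re, Complex.mul_re, Complex.mul_im, Complex.I_re, Complex.I_im,
    Complex.ofReal_re, Complex.ofReal_im]
  ring

lemma natAbs_le_quad (s : ℤ) (h0 : s ≠ 0) (h1 : s ≠ -1) (h2 : s ≠ -2) :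
    (((s+1).natAbs : ℝ)) ≤ (s:ℝ)^2 + 2*(s:ℝ) := by
  have hcase : (1:ℤ) ≤ s ∨ s ≤ -3 := by omega
  rw [Nat.cast_natAbs]
  push_cast
  rcases hcase with h | h
  · have h' : (1:ℝ) ≤ (s:ℝ) := by exact_mod_cast h
    rw [_root_.abs_of_nonneg (show (0:ℝ) ≤ (s:ℝ) + 1 by linarith)]
    nlinarith
  · have h' : (s:ℝ) ≤ -3 := by exact_mod_cast h
    rw [_root_.abs_of_nonpos (show (s:ℝ) + 1 ≤ 0 by linarith)]
    nlinarith

set_option maxHeartbeats 2000000 in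
lemma gammas_zero (him : 2 ≤ τ.im) : inn τ 0 = 0 ∧ inn τ 1 = 0 := by
  have hτ : 0 < τ.im := by linarith
  set γ₀ := inn τ 0 with hγ₀def
  set γ₁ := inn τ 1 with hγ₁def
  set K : ℝ := ‖γ₀‖ + ‖γ₁‖ with hKdef
  have hK : 0 ≤ K := by positivity
  set r : ℝ := rexp (-π * τ.im / 2) with hrdef
  have hr0 : 0 ≤ r := (Real.exp_pos _).le
  have hrpos : 0 < r := Real.exp_pos _
  have hr10 : r ≤ 1/10 := by
    have hexp1 := Real.exp_one_gt_d9
    have h3 : (10:ℝ) ≤ Real.exp 3 := by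
      have he : Real.exp 3 = Real.exp 1 ^ (3:ℕ) := by
        rw [← Real.exp_nat_mul]; norm_num
      have h27 : (2.7:ℝ) ^ (3:ℕ) ≤ Real.exp 1 ^ (3:ℕ) :=
        pow_le_pow_left₀ (by norm_num) (by linarith) 3
      rw [he]
      nlinarith
    have hpi3 := Real.pi_gt_three
    have hmono : rexp (-π * τ.im / 2) ≤ rexp (-3) := by
      apply Real.exp_le_exp.mpr
      nlinarith
    have hneg : rexp (-3) = (Real.exp 3)⁻¹ := by
      rw [← Real.exp_neg]
    have h10 : (Real.exp 3)⁻¹ ≤ 1/10 := by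
      rw [show (1:ℝ)/10 = ((10:ℝ))⁻¹ by norm_num]
      exact inv_anti₀ (by norm_num) h3
    rw [hrdef]
    rw [hneg] at hmono
    linarith
  have hr1 : r < 1 := by linarith
  have h1r : (0:ℝ) < 1 - r := by linarith
  -- the two linear equations
  set c : ℂ := cexp (-(π : ℂ) * I * τ / 2) with hcdef
  set ξ : ℂ := cexp (-(2:ℂ) * π * I / 5) with hξdef
  have hξ5 : ξ^5 = 1 := by
    rw [hξdef, ← Complex.exp_nat_mul]
    rw [show ((5:ℕ):ℂ) * (-(2:ℂ) * π * I / 5) = -(2 * π * I) by push_cast; ring]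
    rw [Complex.exp_neg, Complex.exp_two_pi_mul_I]
    norm_num
  have hnξ : ∀ n : ℕ, ‖ξ^n‖ = 1 := by
    intro n
    rw [hξdef, ← Complex.exp_nat_mul, Complex.norm_exp]
    rw [show ((n:ℂ)) * (-(2:ℂ) * π * I / 5) = ((-2*π*n/5 : ℝ):ℂ) * I by push_cast; ring]
    simp [Complex.mul_re, Complex.I_re, Complex.I_im, Complex.ofReal_re, Complex.ofReal_im]
  have hnc : ‖c‖ = rexp (π * τ.im / 2) := by
    rw [hcdef, show -(π : ℂ) * I * τ / 2 = ((-π/2 : ℝ):ℂ) * τ * I + ((0:ℝ):ℂ) * I by push_cast; ring,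
      norm_cexp_aux]
    congr 1
    ring
  have hcr : r * rexp (π * τ.im / 2) = 1 := by
    rw [hrdef, ← Real.exp_add]
    rw [show -π * τ.im / 2 + π * τ.im / 2 = 0 by ring, Real.exp_zero]
  -- derive equation for k = 1, 2
  have main : ∀ k : ℕ, 1 ≤ k → k ≤ 2 → G τ (τ/2 + (k:ℂ)/5) = 0 →
      ‖γ₀ + c * ξ^k * γ₁ + ξ^(2*k) * γ₀‖ ≤ 2 * K * r^2 / (1 - r) := by
    intro k hk1 hk2 hGk
    have hd := decomp hτ (τ/2 + (k:ℂ)/5)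
    rw [hGk] at hd
    set F : ℤ → ℂ := fun s =>
      cexp (2 * π * I * s * (τ/2 + (k:ℂ)/5) + π * I * τ * (s:ℂ)^2 / 2) * inn τ s with hFdef
    have hsum : Summable F := hd.summable
    have htsum : ∑' s : ℤ, F s = 0 := hd.tsum_eq
    have hinn_bd : ∀ s : ℤ, ‖inn τ s‖ ≤ K := by
      intro s
      rw [inn_parity]
      split
      · rw [hKdef]; have := norm_nonneg γ₁; simp only [← hγ₀def]; linarith
      · rw [hKdef]; have := norm_nonneg γ₀; simp only [← hγ₁def]; linarith
    have hF : ∀ s : ℤ, s ≠ 0 → s ≠ -1 → s ≠ -2 → ‖F s‖ ≤ K * r ^ (s + 1).natAbs := by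
      intro s h0 h1 h2
      rw [hFdef]
      simp only
      rw [norm_mul]
      have hexp : cexp (2 * π * I * s * (τ/2 + (k:ℂ)/5) + π * I * τ * (s:ℂ)^2 / 2)
          = cexp ((((π * ((s:ℝ)^2 + 2*s) / 2) : ℝ):ℂ) * τ * I + (((2*π*s*k/5) : ℝ):ℂ) * I) := by
        congr 1
        push_cast
        ring
      rw [hexp, norm_cexp_aux]
      have hrpow : r ^ (s + 1).natAbs = rexp (-(π * ((s + 1).natAbs : ℝ) * τ.im / 2)) := by
        rw [hrdef, ← Real.exp_nat_mul]
        congr 1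
        ring
      have hle : rexp (-(π * ((s:ℝ)^2 + 2*s) / 2 * τ.im)) ≤ rexp (-(π * ((s + 1).natAbs : ℝ) * τ.im / 2)) := by
        apply Real.exp_le_exp.mpr
        have hq := natAbs_le_quad s h0 h1 h2
        have hmul := mul_le_mul_of_nonneg_left hq (le_of_lt (mul_pos Real.pi_pos hτ))
        nlinarith [hmul]
      calc rexp (-(π * ((s:ℝ)^2 + 2*s) / 2 * τ.im)) * ‖inn τ s‖
          ≤ rexp (-(π * ((s + 1).natAbs : ℝ) * τ.im / 2)) * K := by
            apply mul_le_mul hle (hinn_bd s) (norm_nonneg _) (Real.exp_pos _).le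
        _ = K * r ^ (s + 1).natAbs := by rw [hrpow]; ring
    have ht3 := tail3 hsum hr0 hr1 hK hF
    rw [htsum] at ht3
    have hF0 : F 0 = γ₀ := by
      rw [hFdef]
      simp only [Int.cast_zero, mul_zero, zero_mul, zero_div, add_zero, ne_eq,
        OfNat.ofNat_ne_zero, not_false_eq_true, zero_pow, Complex.exp_zero, one_mul, hγ₀def]
    have hFm1 : F (-1) = c * ξ^k * γ₁ := by
      rw [hFdef]
      simp only
      rw [show inn τ (-1) = γ₁ by rw [inn_parity]; simp [Int.not_even_iff_odd.mpr (show Odd (-1:ℤ) from ⟨-1, by ring⟩), hγ₁def]]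
      rw [hcdef, hξdef, ← Complex.exp_nat_mul, ← Complex.exp_add]
      congr 2
      push_cast
      ring
    have hFm2 : F (-2) = ξ^(2*k) * γ₀ := by
      rw [hFdef]
      simp only
      rw [show inn τ (-2) = γ₀ by rw [inn_parity]; simp [show Even (-2:ℤ) from ⟨-1, by ring⟩, hγ₀def]]
      rw [hξdef, ← Complex.exp_nat_mul]
      congr 2
      push_cast
      ring
    rw [hF0, hFm1, hFm2] at ht3
    calc ‖γ₀ + c * ξ^k * γ₁ + ξ^(2*k) * γ₀‖
        = ‖0 - γ₀ - c * ξ^k * γ₁ - ξ^(2*k) * γ₀‖ := by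
          rw [show (0:ℂ) - γ₀ - c * ξ^k * γ₁ - ξ^(2*k) * γ₀
            = -(γ₀ + c * ξ^k * γ₁ + ξ^(2*k) * γ₀) by ring, norm_neg]
      _ ≤ 2 * K * r^2 / (1 - r) := ht3
  have hE1 := main 1 le_rfl (by norm_num) (by simpa using eval₁ τ)
  have hE2 := main 2 (by norm_num) le_rfl (by simpa using eval₂ τ)
  norm_num at hE1 hE2
  set ε : ℝ := 2 * K * r^2 / (1 - r) with hεdef
  have hεpos : 0 ≤ ε := by positivity
  -- M and its lower bound
  set M : ℂ := ξ^2 + ξ^4 - ξ - 1 with hMdef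
  have hMre : M.re = Real.cos (4*π/5) - 1 := by
    have hre : ∀ n : ℕ, (ξ^n).re = Real.cos (2*π*n/5) := by
      intro n
      rw [hξdef, ← Complex.exp_nat_mul,
        show ((n:ℂ)) * (-(2:ℂ) * π * I / 5) = ((-(2*π*n/5) : ℝ):ℂ) * I by push_cast; ring,
        Complex.exp_ofReal_mul_I_re, Real.cos_neg]
    have hre1 : ξ.re = Real.cos (2*π/5) := by
      have h := hre 1
      rw [pow_one] at h
      rw [h]
      norm_num
    have hre2 : (ξ^2).re = Real.cos (4*π/5) := by
      rw [hre 2, show 2*π*((2:ℕ):ℝ)/5 = 4*π/5 by push_cast; ring]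
    have hre4 : (ξ^4).re = Real.cos (2*π/5) := by
      rw [hre 4, show 2*π*((4:ℕ):ℝ)/5 = 2*π - 2*π/5 by push_cast; ring, Real.cos_two_pi_sub]
    rw [hMdef]
    simp only [Complex.sub_re, Complex.add_re, Complex.one_re, hre1, hre2, hre4]
    ring
  have hMlow : 1 ≤ ‖M‖ := by
    have h1 : Real.cos (4*π/5) ≤ 0 := by
      apply Real.cos_nonpos_of_pi_div_two_le_of_le
      · nlinarith [Real.pi_pos]
      · nlinarith [Real.pi_pos]
    have h2 : |M.re| ≤ ‖M‖ := by
      exact Complex.abs_re_le_norm M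
    rw [hMre] at h2
    have : 1 ≤ |Real.cos (4*π/5) - 1| := by
      rw [abs_sub_comm, _root_.abs_of_nonneg (by linarith : (0:ℝ) ≤ 1 - Real.cos (4*π/5))]
      linarith
    linarith
  -- eliminate
  have elim0 : γ₀ * M = ξ^2 * (γ₀ + c * ξ * γ₁ + ξ^2 * γ₀) - ξ * (γ₀ + c * ξ^2 * γ₁ + ξ^4 * γ₀) := by
    rw [hMdef]; linear_combination γ₀ * hξ5
  have elim1 : c * γ₁ * M = (1 + ξ^2) * (γ₀ + c * ξ^2 * γ₁ + ξ^4 * γ₀)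
      - (1 + ξ^4) * (γ₀ + c * ξ * γ₁ + ξ^2 * γ₀) := by
    rw [hMdef]; linear_combination c * γ₁ * hξ5
  have hγ0bound : ‖γ₀‖ ≤ 2 * ε := by
    have h := congrArg norm elim0
    have hle : ‖γ₀ * M‖ ≤ 2 * ε := by
      rw [elim0]
      calc ‖ξ^2 * (γ₀ + c * ξ * γ₁ + ξ^2 * γ₀) - ξ * (γ₀ + c * ξ^2 * γ₁ + ξ^4 * γ₀)‖
          ≤ ‖ξ^2 * (γ₀ + c * ξ * γ₁ + ξ^2 * γ₀)‖ + ‖ξ * (γ₀ + c * ξ^2 * γ₁ + ξ^4 * γ₀)‖ :=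
            norm_sub_le _ _
        _ = ‖ξ^2‖ * ‖γ₀ + c * ξ * γ₁ + ξ^2 * γ₀‖ + ‖ξ^1‖ * ‖γ₀ + c * ξ^2 * γ₁ + ξ^4 * γ₀‖ := by
            rw [norm_mul, norm_mul, pow_one]
        _ ≤ 1 * ε + 1 * ε := by
            rw [hnξ 2, hnξ 1]
            exact add_le_add (by simpa using hE1) (by simpa using hE2)
        _ = 2 * ε := by ring
    calc ‖γ₀‖ = ‖γ₀‖ * 1 := by ring
      _ ≤ ‖γ₀‖ * ‖M‖ := by
          apply mul_le_mul_of_nonneg_left hMlow (norm_nonneg _)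
      _ = ‖γ₀ * M‖ := (norm_mul _ _).symm
      _ ≤ 2 * ε := hle
  have hγ1bound : ‖γ₁‖ ≤ 4 * ε * r := by
    have hle : ‖c * γ₁ * M‖ ≤ 4 * ε := by
      rw [elim1]
      calc ‖(1 + ξ^2) * (γ₀ + c * ξ^2 * γ₁ + ξ^4 * γ₀) - (1 + ξ^4) * (γ₀ + c * ξ * γ₁ + ξ^2 * γ₀)‖
          ≤ ‖(1 + ξ^2)‖ * ‖γ₀ + c * ξ^2 * γ₁ + ξ^4 * γ₀‖
            + ‖(1 + ξ^4)‖ * ‖γ₀ + c * ξ * γ₁ + ξ^2 * γ₀‖ := by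
            refine (norm_sub_le _ _).trans ?_
            rw [norm_mul, norm_mul]
        _ ≤ 2 * ε + 2 * ε := by
            have hb1 : ‖(1:ℂ) + ξ^2‖ ≤ 2 := by
              calc ‖(1:ℂ) + ξ^2‖ ≤ ‖(1:ℂ)‖ + ‖ξ^2‖ := norm_add_le _ _
                _ = 2 := by rw [hnξ 2, norm_one]; norm_num
            have hb2 : ‖(1:ℂ) + ξ^4‖ ≤ 2 := by
              calc ‖(1:ℂ) + ξ^4‖ ≤ ‖(1:ℂ)‖ + ‖ξ^4‖ := norm_add_le _ _
                _ = 2 := by rw [hnξ 4, norm_one]; norm_num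
            have h1 : ‖γ₀ + c * ξ^2 * γ₁ + ξ^4 * γ₀‖ ≤ ε := by simpa using hE2
            have h2 : ‖γ₀ + c * ξ * γ₁ + ξ^2 * γ₀‖ ≤ ε := by simpa using hE1
            have := norm_nonneg (γ₀ + c * ξ^2 * γ₁ + ξ^4 * γ₀)
            have := norm_nonneg (γ₀ + c * ξ * γ₁ + ξ^2 * γ₀)
            nlinarith
        _ = 4 * ε := by ring
    have hexpand : ‖c * γ₁ * M‖ = rexp (π * τ.im / 2) * ‖γ₁‖ * ‖M‖ := by
      rw [norm_mul, norm_mul, hnc]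
    rw [hexpand] at hle
    have h1 : rexp (π * τ.im / 2) * ‖γ₁‖ * 1 ≤ rexp (π * τ.im / 2) * ‖γ₁‖ * ‖M‖ := by
      apply mul_le_mul_of_nonneg_left hMlow (by positivity)
    have h2 : rexp (π * τ.im / 2) * ‖γ₁‖ ≤ 4 * ε := by linarith
    have h3 := mul_le_mul_of_nonneg_left h2 hr0
    rw [show r * (rexp (π * τ.im / 2) * ‖γ₁‖) = (r * rexp (π * τ.im / 2)) * ‖γ₁‖ by ring,
      hcr, one_mul] at h3
    linarith
  -- conclude K = 0
  have hKle : K ≤ 6 * ε := by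
    rw [hKdef]
    have : 4 * ε * r ≤ 4 * ε * 1 := by
      apply mul_le_mul_of_nonneg_left (by linarith) (by positivity)
    linarith
  have hKz : K = 0 := by
    have h6 : 6 * ε = 12 * K * r^2 / (1 - r) := by rw [hεdef]; ring
    have h1 : K * (1 - r) ≤ 12 * K * r^2 := by
      have h7 := hKle
      rw [h6, le_div_iff₀ h1r] at h7
      linarith
    have hr2 : r^2 ≤ 1/100 := by nlinarith [mul_le_mul hr10 hr10 hr0 (by norm_num : (0:ℝ) ≤ 1/10)]
    have hKr : K * r ≤ K * (1/10) := mul_le_mul_of_nonneg_left hr10 hK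
    have hKr2 : 12 * K * r^2 ≤ 12 * K * (1/100) := by
      have h12 : (0:ℝ) ≤ 12 * K := by positivity
      calc 12 * K * r^2 = 12 * K * r^2 := rfl
        _ ≤ 12 * K * (1/100) := mul_le_mul_of_nonneg_left hr2 h12
    have hfin : K ≤ 0 := by nlinarith
    linarith
  constructor
  · have : ‖γ₀‖ = 0 := by
      have := norm_nonneg γ₀; have := norm_nonneg γ₁
      rw [hKdef] at hKz; linarith
    exact norm_eq_zero.mp this
  · have : ‖γ₁‖ = 0 := by
      have := norm_nonneg γ₀; have := norm_nonneg γ₁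
      rw [hKdef] at hKz; linarith
    exact norm_eq_zero.mp this

lemma Gzero (him : 2 ≤ τ.im) (w : ℂ) : G τ w = 0 := by
  have hτ : 0 < τ.im := by linarith
  obtain ⟨h0, h1⟩ := gammas_zero him
  have hd := decomp hτ w
  have hz : ∀ s : ℤ, cexp (2*π*I*(s:ℂ)*w + π*I*τ*(s:ℂ)^2/2) * inn τ s = 0 := by
    intro s
    rw [inn_parity]
    split <;> simp [h0, h1]
  rw [funext hz] at hd
  exact hd.unique hasSum_zero

lemma theta_form (z τ : ℂ) (c : ℝ) (j : ℕ) (v : ℂ) (hc : (c:ℂ) * 5 = j)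
    (hv : v = z + τ/2 + (j:ℂ)/10) :
    thetaChar 1 c z τ = cexp (π*I*τ/4) * cexp (π*I*z) * u^j * jacobiTheta₂ v τ := by
  rw [theta_as_J, u_pow, ← Complex.exp_add, ← Complex.exp_add, hv]
  have hcc : (c:ℂ)/2 = (j:ℂ)/10 := by linear_combination hc/10
  rw [show z + (c:ℂ)/2 + τ/2 = z + τ/2 + (j:ℂ)/10 by rw [hcc]; ring]
  congr 2
  linear_combination (π:ℂ)*I*hcc

lemma stmt_strip (z τ : ℂ) (him : 2 ≤ τ.im) :
    thetaChar 1 (3/5) 0 τ ^ 2 * thetaChar 1 (1/5) z τ * thetaChar 1 (9/5) z τ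
      - thetaChar 1 (1/5) 0 τ ^ 2 * thetaChar 1 (3/5) z τ * thetaChar 1 (7/5) z τ
      + thetaChar 1 (1/5) 0 τ * thetaChar 1 (3/5) 0 τ * thetaChar 1 1 z τ ^ 2 = 0 := by
  have hA0 : thetaChar 1 (3/5) 0 τ
      = cexp (π*I*τ/4) * cexp (π*I*(0:ℂ)) * u^3 * jacobiTheta₂ (τ/2 + 3/10) τ :=
    theta_form 0 τ (3/5) 3 _ (by norm_num) (by push_cast; ring)
  have hB0 : thetaChar 1 (1/5) 0 τ
      = cexp (π*I*τ/4) * cexp (π*I*(0:ℂ)) * u^1 * jacobiTheta₂ (τ/2 + 1/10) τ :=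
    theta_form 0 τ (1/5) 1 _ (by norm_num) (by push_cast; ring)
  have h1 : thetaChar 1 (1/5) z τ
      = cexp (π*I*τ/4) * cexp (π*I*z) * u^1 * jacobiTheta₂ (z + τ/2 + 1/10) τ :=
    theta_form z τ (1/5) 1 _ (by norm_num) (by push_cast; ring)
  have h3 : thetaChar 1 (3/5) z τ
      = cexp (π*I*τ/4) * cexp (π*I*z) * u^3 * jacobiTheta₂ (z + τ/2 + 3/10) τ :=
    theta_form z τ (3/5) 3 _ (by norm_num) (by push_cast; ring)
  have h9 : thetaChar 1 (9/5) z τ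
      = cexp (π*I*τ/4) * cexp (π*I*z) * u^9 * jacobiTheta₂ (z + τ/2 - 1/10) τ := by
    rw [theta_form z τ (9/5) 9 (z + τ/2 - 1/10 + 1) (by norm_num) (by push_cast; ring),
      jacobiTheta₂_add_left]
  have h7 : thetaChar 1 (7/5) z τ
      = cexp (π*I*τ/4) * cexp (π*I*z) * u^7 * jacobiTheta₂ (z + τ/2 - 3/10) τ := by
    rw [theta_form z τ (7/5) 7 (z + τ/2 - 3/10 + 1) (by norm_num) (by push_cast; ring),
      jacobiTheta₂_add_left]
  have h5 : thetaChar 1 1 z τ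
      = cexp (π*I*τ/4) * cexp (π*I*z) * u^5 * jacobiTheta₂ (z + τ/2 + 1/2) τ :=
    theta_form z τ 1 5 _ (by norm_num) (by push_cast; ring)
  have hG := Gzero him (z + τ/2)
  have hhalf : jacobiTheta₂ (z + τ/2 - 1/2) τ = jacobiTheta₂ (z + τ/2 + 1/2) τ := by
    rw [show z + τ/2 + 1/2 = z + τ/2 - 1/2 + 1 by ring]
    exact (jacobiTheta₂_add_left _ _).symm
  rw [G, hhalf] at hG
  rw [hA0, hB0, h1, h3, h9, h7, h5,
    show (π:ℂ)*I*(0:ℂ) = 0 by ring, Complex.exp_zero]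
  rw [Ac, Bc] at hG
  linear_combination (cexp (π*I*τ/4)^4 * cexp (π*I*z)^2 * u^12) * hG

lemma diffJ (v d : ℂ) {τ₀ : ℂ} (hτ₀ : 0 < τ₀.im) :
    DifferentiableAt ℂ (fun τ : ℂ => jacobiTheta₂ (v + d * τ) τ) τ₀ := by
  have h := (hasFDerivAt_jacobiTheta₂ (v + d * τ₀) hτ₀).differentiableAt
  have hpair : DifferentiableAt ℂ (fun τ : ℂ => (v + d * τ, τ)) τ₀ :=
    DifferentiableAt.prodMk ((differentiableAt_const v).add
      ((differentiableAt_fun_id).const_mul d)) differentiableAt_fun_id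
  have hc := DifferentiableAt.comp (f := fun τ : ℂ => (v + d * τ, τ))
    (g := fun p : ℂ × ℂ => jacobiTheta₂ p.1 p.2) τ₀ h hpair
  exact hc

lemma diffTheta (c : ℝ) (z : ℂ) {τ₀ : ℂ} (hτ₀ : 0 < τ₀.im) :
    DifferentiableAt ℂ (fun τ : ℂ => thetaChar 1 c z τ) τ₀ := by
  have heq : (fun τ : ℂ => thetaChar 1 c z τ)
      = fun τ : ℂ => cexp (π * I * (τ/4 + z + (c : ℂ)/2))
        * jacobiTheta₂ ((z + (c : ℂ)/2) + (1/2) * τ) τ := by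
    funext τ
    rw [theta_as_J]
    congr 2
    ring
  rw [heq]
  apply DifferentiableAt.mul
  · apply DifferentiableAt.cexp
    fun_prop
  · exact diffJ (z + (c : ℂ)/2) (1/2) hτ₀

end S3

theorem stmt_3 (z τ : ℂ) (hτ : 0 < τ.im) :
    thetaChar 1 (3/5) 0 τ ^ 2 * thetaChar 1 (1/5) z τ * thetaChar 1 (9/5) z τ
      - thetaChar 1 (1/5) 0 τ ^ 2 * thetaChar 1 (3/5) z τ * thetaChar 1 (7/5) z τ
      + thetaChar 1 (1/5) 0 τ * thetaChar 1 (3/5) 0 τ * thetaChar 1 1 z τ ^ 2 = 0 := by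
  have key : Set.EqOn (fun t : ℂ =>
      thetaChar 1 (3/5) 0 t ^ 2 * thetaChar 1 (1/5) z t * thetaChar 1 (9/5) z t
      - thetaChar 1 (1/5) 0 t ^ 2 * thetaChar 1 (3/5) z t * thetaChar 1 (7/5) z t
      + thetaChar 1 (1/5) 0 t * thetaChar 1 (3/5) 0 t * thetaChar 1 1 z t ^ 2)
      0 {t : ℂ | 0 < t.im} := by
    refine AnalyticOnNhd.eqOn_zero_of_preconnected_of_eventuallyEq_zero (𝕜 := ℂ)
      ?_ (convex_halfSpace_im_gt 0).isPreconnected (z₀ := 3*I) ?_ ?_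
    · refine DifferentiableOn.analyticOnNhd ?_ (isOpen_lt continuous_const Complex.continuous_im)
      intro t ht
      have hti : 0 < t.im := ht
      apply DifferentiableAt.differentiableWithinAt
      have hA := S3.diffTheta (3/5) 0 hti
      have hB := S3.diffTheta (1/5) 0 hti
      have h1 := S3.diffTheta (1/5) z hti
      have h3 := S3.diffTheta (3/5) z hti
      have h7 := S3.diffTheta (7/5) z hti
      have h9 := S3.diffTheta (9/5) z hti
      have h11 := S3.diffTheta 1 z hti
      exact ((((hA.pow 2).mul h1).mul h9).sub (((hB.pow 2).mul h3).mul h7)).add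
        ((hB.mul hA).mul (h11.pow 2))
    · show (3*I) ∈ {t : ℂ | 0 < t.im}
      simp
    · have hopen : IsOpen {t : ℂ | 2 < t.im} := isOpen_lt continuous_const Complex.continuous_im
      have hmem : (3*I) ∈ {t : ℂ | 2 < t.im} := by
        simp [Complex.mul_im]
        norm_num
      filter_upwards [hopen.mem_nhds hmem] with t ht
      exact S3.stmt_strip z t (le_of_lt ht)
  exact key hτ
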